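/- With W = ⟨X,S,T⟩/⟨S^P X^Q T^R⟩ as above (P having no root among p^n-th roots of unity), suppose B, C ∈ Z_p[X] satisfy BC = X^{p^n} - 1. Then the 'cohomology' quotient H(B,C,W) = ker(B on W)/im(C on W) has order |Z_p/C(1)Z_p| if B(1) = 0, and is trivial if B(1) ≠ 0. In particular |H⁰(G,W)| = p^n and |H¹(G,W)| = 1. -/

import Mathlib

open Polynomial

set_option synthInstance.maxHeartbeats 1000000
set_option maxHeartbeats 1000000

noncomputable section

attribute [local instance] Classical.propDecidable

/-- The ideal `(X^{p^n} - 1)` of `ℤ_p[X]`. -/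
def IgZ (p n : ℕ) [Fact p.Prime] : Ideal (Polynomial ℤ_[p]) :=
  Ideal.span {(X : Polynomial ℤ_[p]) ^ p ^ n - 1}

/-- The group ring `ℤ_p[G] ≅ ℤ_p[X]/(X^{p^n}-1)` for `G = ℤ/p^nℤ`. -/
abbrev GZ (p n : ℕ) [Fact p.Prime] := Polynomial ℤ_[p] ⧸ IgZ p n

/-- The ideal `(σ - 1)` of `ℤ_p[G]`. -/
def I0Z (p n : ℕ) [Fact p.Prime] : Ideal (GZ p n) :=
  Ideal.span {Ideal.Quotient.mk (IgZ p n) ((X : Polynomial ℤ_[p]) - 1)}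

/-- The trivial `ℤ_p[G]`-module `ℤ_p ≅ ℤ_p[G]/(σ - 1)`. -/
abbrev G0Z (p n : ℕ) [Fact p.Prime] := GZ p n ⧸ I0Z p n

/-- The free module `M = ℤ_p·X ⊕ ℤ_p[G]·S ⊕ ℤ_p[G]·T`. -/
abbrev MZ (p n : ℕ) [Fact p.Prime] := G0Z p n × GZ p n × GZ p n

/-- The relation `q = S^P X^Q T^R` (additively: `X`-component `Q`,
`S`-component `P`, `T`-component `R`). -/
def qZ (p n : ℕ) [Fact p.Prime] (P Q R : Polynomial ℤ_[p]) : MZ p n :=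
  (Ideal.Quotient.mk (I0Z p n) (Ideal.Quotient.mk (IgZ p n) Q),
   Ideal.Quotient.mk (IgZ p n) P, Ideal.Quotient.mk (IgZ p n) R)

/-- The formal space `W = ⟨X,S,T⟩/⟨S^P X^Q T^R⟩` over `ℤ_p[G]`. -/
abbrev WZ (p n : ℕ) [Fact p.Prime] (P Q R : Polynomial ℤ_[p]) :=
  MZ p n ⧸ Submodule.span (GZ p n) {qZ p n P Q R}

/-- `H(B,C,W) = ker(B·)/(ker(B·) ∩ im(C·))` for multiplication operators `B, C`. -/
abbrev cohQuot (A : Type*) [CommRing A] (M : Type*) [AddCommGroup M]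
    [Module A M] (a b : A) :=
  LinearMap.ker (LinearMap.lsmul A M a) ⧸
    Submodule.comap (LinearMap.ker (LinearMap.lsmul A M a)).subtype
      (LinearMap.range (LinearMap.lsmul A M b))

lemma aux_nzd (p n : ℕ) [Fact p.Prime] (P : Polynomial ℤ_[p])
    (hP : ∀ ξ : AlgebraicClosure ℚ_[p], ξ ^ p ^ n = 1 →
      Polynomial.eval₂
        ((algebraMap ℚ_[p] (AlgebraicClosure ℚ_[p])).comp PadicInt.Coe.ringHom)
        ξ P ≠ 0)
    (g : Polynomial ℤ_[p]) (h : ((X:Polynomial ℤ_[p])^p^n - 1) ∣ g * P) :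
    ((X:Polynomial ℤ_[p])^p^n - 1) ∣ g := by
  classical
  set K := AlgebraicClosure ℚ_[p] with hK
  set φ : ℤ_[p] →+* K := (algebraMap ℚ_[p] K).comp PadicInt.Coe.ringHom with hφ
  have hcoeinj : Function.Injective (PadicInt.Coe.ringHom (p := p)) := by
    intro a b hab
    exact Subtype.coe_injective (by exact_mod_cast hab)
  have hφinj : Function.Injective φ :=
    (FaithfulSMul.algebraMap_injective ℚ_[p] K).comp hcoeinj
  have hpn : (p:ℕ) ^ n ≠ 0 := pow_ne_zero _ (Fact.out : p.Prime).ne_zero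
  have hf : ((X:Polynomial ℤ_[p])^p^n - 1).Monic := by
    simpa using monic_X_pow_sub_C (1 : ℤ_[p]) hpn
  set f : Polynomial ℤ_[p] := (X:Polynomial ℤ_[p])^p^n - 1 with hfdef
  have hcop : IsCoprime (f.map φ) (P.map φ) := by
    rw [← EuclideanDomain.gcd_isUnit_iff]
    by_contra hu
    set d := EuclideanDomain.gcd (f.map φ) (P.map φ) with hd
    have hg0 : d ≠ 0 := by
      intro h0
      rw [hd, EuclideanDomain.gcd_eq_zero_iff] at h0
      exact (hf.map φ).ne_zero h0.1
    have hdeg : d.degree ≠ 0 := fun hdg => hu (isUnit_iff_degree_eq_zero.mpr hdg)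
    obtain ⟨ξ, hξ⟩ := IsAlgClosed.exists_root d hdeg
    have hξf : (f.map φ).IsRoot ξ := hξ.dvd (EuclideanDomain.gcd_dvd_left _ _)
    have hξP : (P.map φ).IsRoot ξ := hξ.dvd (EuclideanDomain.gcd_dvd_right _ _)
    have h1 : ξ ^ p ^ n = 1 := by
      have := hξf
      rw [IsRoot, eval_map, hfdef] at this
      simp only [eval₂_sub, eval₂_pow, eval₂_X, eval₂_one] at this
      linear_combination this
    have h2 : Polynomial.eval₂ φ ξ P = 0 := by
      rwa [IsRoot, eval_map] at hξP
    exact hP ξ h1 h2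
  have hmdvd : f.map φ ∣ (g * P).map φ := Polynomial.map_dvd φ h
  rw [Polynomial.map_mul] at hmdvd
  exact (map_dvd_map φ hφinj hf).mp (hcop.dvd_of_dvd_mul_right hmdvd)

lemma aux_card_padic (p n : ℕ) [Fact p.Prime] :
    Nat.card (ℤ_[p] ⧸ Ideal.span {((p^n : ℕ) : ℤ_[p])}) = p ^ n := by
  have hs : Function.Surjective (PadicInt.toZModPow (p := p) n) := by
    intro x; exact ⟨(x.val : ℤ_[p]), by simp [ZMod.natCast_val]⟩
  have e := RingHom.quotientKerEquivOfSurjective hs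
  replace e := (Ideal.quotEquivOfEq (PadicInt.ker_toZModPow (p := p) n).symm).trans e
  have h2 : Nat.card (ℤ_[p] ⧸ Ideal.span {(p:ℤ_[p])^n}) = Nat.card (ZMod (p^n)) :=
    Nat.card_congr e.toEquiv
  rw [Nat.cast_pow, h2, Nat.card_zmod]

lemma key (p n : ℕ) [Fact p.Prime] (P Q R : Polynomial ℤ_[p])
    (hP : ∀ ξ : AlgebraicClosure ℚ_[p], ξ ^ p ^ n = 1 →
      Polynomial.eval₂
        ((algebraMap ℚ_[p] (AlgebraicClosure ℚ_[p])).comp PadicInt.Coe.ringHom)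
        ξ P ≠ 0)
    (B C : Polynomial ℤ_[p])
    (hBC : ((X:Polynomial ℤ_[p])^p^n - 1) ∣ B * C)
    (hkb : ∀ g : Polynomial ℤ_[p], ((X:Polynomial ℤ_[p])^p^n - 1) ∣ g * B → C ∣ g)
    (hkc : ∀ g : Polynomial ℤ_[p], ((X:Polynomial ℤ_[p])^p^n - 1) ∣ g * C → B ∣ g) :
    Nat.card (cohQuot (GZ p n) (WZ p n P Q R)
        (Ideal.Quotient.mk (IgZ p n) B) (Ideal.Quotient.mk (IgZ p n) C))
      = if B.eval 1 = 0 then Nat.card (ℤ_[p] ⧸ Ideal.span {C.eval 1}) else 1 := by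
  classical
  set f : Polynomial ℤ_[p] := (X:Polynomial ℤ_[p])^p^n - 1 with hfdef
  set π : Polynomial ℤ_[p] →+* GZ p n := Ideal.Quotient.mk (IgZ p n) with hπdef
  set mk0 : GZ p n →+* G0Z p n := Ideal.Quotient.mk (I0Z p n) with hmk0def
  set q : MZ p n := qZ p n P Q R with hqdef
  set b : GZ p n := π B with hbdef
  set c : GZ p n := π C with hcdef
  have hπsurj : Function.Surjective π := Ideal.Quotient.mk_surjective
  have hπ0 : ∀ g : Polynomial ℤ_[p], π g = 0 ↔ f ∣ g := by
    intro g
    rw [hπdef, Ideal.Quotient.eq_zero_iff_mem, IgZ, Ideal.mem_span_singleton]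
  -- eval-at-1
  have hev1mem : ∀ a ∈ IgZ p n, (Polynomial.evalRingHom (1:ℤ_[p])) a = 0 := by
    intro a ha
    rw [IgZ, Ideal.mem_span_singleton] at ha
    obtain ⟨u, rfl⟩ := ha
    simp
  set ev1 : GZ p n →+* ℤ_[p] := Ideal.Quotient.lift (IgZ p n) (Polynomial.evalRingHom 1) hev1mem
    with hev1def
  have hev1π : ∀ g : Polynomial ℤ_[p], ev1 (π g) = g.eval 1 := by
    intro g; rw [hev1def, hπdef, Ideal.Quotient.lift_mk]; rfl
  have hev10 : ∀ a ∈ I0Z p n, ev1 a = 0 := by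
    intro a ha
    rw [I0Z, Ideal.mem_span_singleton] at ha
    obtain ⟨u, rfl⟩ := ha
    obtain ⟨g, rfl⟩ := hπsurj u
    rw [← map_mul, hev1π]
    simp
  set E : G0Z p n →+* ℤ_[p] := Ideal.Quotient.lift (I0Z p n) ev1 hev10 with hEdef
  have hE : ∀ g : Polynomial ℤ_[p], E (mk0 (π g)) = g.eval 1 := by
    intro g; rw [hEdef, hmk0def, Ideal.Quotient.lift_mk, hev1π]
  have hmk0surj : ∀ y : G0Z p n, ∃ g : Polynomial ℤ_[p], mk0 (π g) = y := by
    intro y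
    obtain ⟨u, rfl⟩ := Ideal.Quotient.mk_surjective (I := I0Z p n) y
    obtain ⟨g, rfl⟩ := hπsurj u
    exact ⟨g, rfl⟩
  have hmk0zero : ∀ g : Polynomial ℤ_[p], g.eval 1 = 0 → mk0 (π g) = 0 := by
    intro g hg
    rw [hmk0def, Ideal.Quotient.eq_zero_iff_mem, I0Z, Ideal.mem_span_singleton]
    have : (X - 1 : Polynomial ℤ_[p]) ∣ g := by
      have := (dvd_iff_isRoot (p := g) (a := (1:ℤ_[p]))).mpr hg
      simpa using this
    obtain ⟨u, rfl⟩ := this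
    exact ⟨π u, by rw [map_mul]⟩
  have hEinj : Function.Injective E := by
    rw [injective_iff_map_eq_zero]
    intro y hy
    obtain ⟨g, rfl⟩ := hmk0surj y
    rw [hE] at hy
    exact hmk0zero g hy
  -- defeq-safe smul lemmas
  have hsmul0 : ∀ (a u : GZ p n), a • (mk0 u) = mk0 (a * u) := fun a u => rfl
  have hsmulM : ∀ (a : GZ p n) (m : MZ p n), a • m = (a • m.1, a * m.2.1, a * m.2.2) :=
    fun a m => rfl
  have hms : ∀ (x y : GZ p n) (m : MZ p n), (x * y) • m = x • y • m :=
    fun x y m => mul_smul x y m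
  have hsub : ∀ (x : GZ p n) (m m' : MZ p n), x • (m - m') = x • m - x • m' :=
    fun x m m' => smul_sub x m m'
  have hadd : ∀ (x : GZ p n) (m m' : MZ p n), x • (m + m') = x • m + x • m' :=
    fun x m m' => smul_add x m m'
  have hzs : ∀ m : MZ p n, (0 : GZ p n) • m = 0 := fun m => zero_smul (GZ p n) m
  have hsz0 : ∀ a : GZ p n, a • (0 : G0Z p n) = 0 := fun a => smul_zero a
  -- algebra facts
  have hbc0 : b * c = 0 := by
    rw [hbdef, hcdef, ← map_mul, hπ0]; exact hBC
  have hbA : ∀ a : GZ p n, b * a = 0 → ∃ a', a = a' * c := by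
    intro a ha
    obtain ⟨g, rfl⟩ := hπsurj a
    rw [mul_comm, hbdef, ← map_mul, hπ0] at ha
    obtain ⟨h, rfl⟩ := hkb g ha
    exact ⟨π h, by rw [map_mul, hcdef]; ring⟩
  have hcA : ∀ a : GZ p n, c * a = 0 → ∃ a', a = a' * b := by
    intro a ha
    obtain ⟨g, rfl⟩ := hπsurj a
    rw [mul_comm, hcdef, ← map_mul, hπ0] at ha
    obtain ⟨h, rfl⟩ := hkc g ha
    exact ⟨π h, by rw [map_mul, hbdef]; ring⟩
  have annq : ∀ a : GZ p n, a • q = 0 → a = 0 := by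
    intro a ha
    have h21 : a * π P = 0 := by
      have := congrArg (fun m : MZ p n => m.2.1) ha
      simpa [hsmulM, hqdef, qZ] using this
    obtain ⟨g, rfl⟩ := hπsurj a
    rw [← map_mul, hπ0] at h21
    rw [hπ0]
    exact aux_nzd p n P hP g h21
  -- W-level
  set N : Submodule (GZ p n) (MZ p n) := Submodule.span (GZ p n) {q} with hNdef
  have hqN : (Submodule.Quotient.mk q : WZ p n P Q R) = 0 := by
    rw [Submodule.Quotient.mk_eq_zero]
    exact Submodule.mem_span_singleton_self q
  have hmkW : ∀ (a : GZ p n) (m : MZ p n),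
      a • (Submodule.Quotient.mk m : WZ p n P Q R) = Submodule.Quotient.mk (a • m) :=
    fun a m => rfl
  -- reduce
  have reduce : ∀ w : WZ p n P Q R, b • w = 0 →
      ∃ m : MZ p n, w = Submodule.Quotient.mk m ∧ b • m = 0 := by
    intro w hw
    obtain ⟨m₀, rfl⟩ := Submodule.Quotient.mk_surjective _ w
    rw [hmkW, Submodule.Quotient.mk_eq_zero] at hw
    obtain ⟨a, ha⟩ := Submodule.mem_span_singleton.mp hw
    have hca : c * a = 0 := by
      apply annq
      rw [hms, ha, ← hms, mul_comm c b, hbc0, hzs]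
    obtain ⟨a', ha'⟩ := hcA a hca
    refine ⟨m₀ - a' • q, ?_, ?_⟩
    · rw [Submodule.Quotient.mk_sub, ← hmkW, hqN, smul_zero, sub_zero]
    · rw [hsub, ← hms, mul_comm b a', ← ha', ha, sub_self]
  -- splitting
  have splitc : ∀ m : MZ p n, b • m = 0 →
      ∃ (x : ℤ_[p]) (m' : MZ p n),
        m = ((mk0 (π (Polynomial.C x)), 0, 0) : MZ p n) + c • m' ∧ (B.eval 1 * x = 0) := by
    intro m hm
    obtain ⟨x0, s, t⟩ := m
    have h1 : b • x0 = 0 := congrArg (fun m : MZ p n => m.1) hm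
    have h2 : b * s = 0 := congrArg (fun m : MZ p n => m.2.1) hm
    have h3 : b * t = 0 := congrArg (fun m : MZ p n => m.2.2) hm
    obtain ⟨s', hs'⟩ := hbA s h2
    obtain ⟨t', ht'⟩ := hbA t h3
    obtain ⟨g, hg⟩ := hmk0surj x0
    refine ⟨g.eval 1, ((0, s', t') : MZ p n), ?_, ?_⟩
    · have hfst : x0 = mk0 (π (Polynomial.C (g.eval 1))) := by
        apply hEinj
        rw [hE, ← hg, hE]
        simp
      rw [hsmulM]
      refine Prod.ext ?_ (Prod.ext ?_ ?_)
      · show x0 = mk0 (π (Polynomial.C (g.eval 1))) + c • (0 : G0Z p n)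
        rw [hsz0, add_zero]
        exact hfst
      · show s = 0 + c * s'
        rw [hs', zero_add, mul_comm]
      · show t = 0 + c * t'
        rw [ht', zero_add, mul_comm]
    · rw [← hg, hsmul0] at h1
      have : E (mk0 (b * π g)) = 0 := by rw [h1, map_zero]
      rw [hbdef, ← map_mul, hE, eval_mul] at this
      exact this
  -- b kills the X-part when B(1)=0
  have hΨker : ∀ x : ℤ_[p], B.eval 1 = 0 →
      b • (((mk0 (π (Polynomial.C x)), 0, 0)) : MZ p n) = 0 := by
    intro x hβ
    have h0 : mk0 (π (B * Polynomial.C x)) = 0 := by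
      apply hmk0zero
      rw [eval_mul, hβ, zero_mul]
    rw [hsmulM]
    refine Prod.ext ?_ (Prod.ext ?_ ?_)
    · show b • mk0 (π (Polynomial.C x)) = 0
      rw [hsmul0, hbdef, ← map_mul]
      exact h0
    · show b * 0 = 0
      rw [mul_zero]
    · show b * 0 = 0
      rw [mul_zero]
  by_cases hβ : B.eval 1 = 0
  · rw [if_pos hβ]
    set Kk := LinearMap.ker (LinearMap.lsmul (GZ p n) (WZ p n P Q R) b) with hKk
    set Im := Submodule.comap Kk.subtype
        (LinearMap.range (LinearMap.lsmul (GZ p n) (WZ p n P Q R) c)) with hIm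
    have hmemK : ∀ x : ℤ_[p],
        (Submodule.Quotient.mk (((mk0 (π (Polynomial.C x)), 0, 0)) : MZ p n) : WZ p n P Q R)
          ∈ Kk := by
      intro x
      rw [hKk, LinearMap.mem_ker, LinearMap.lsmul_apply, hmkW, hΨker x hβ,
        Submodule.Quotient.mk_zero]
    set Θfun : ℤ_[p] → (Kk ⧸ Im) := fun x => Submodule.Quotient.mk
        (⟨Submodule.Quotient.mk (((mk0 (π (Polynomial.C x)), 0, 0)) : MZ p n), hmemK x⟩ : Kk)
      with hΘfun
    have hΘadd : ∀ x y : ℤ_[p], Θfun (x + y) = Θfun x + Θfun y := by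
      intro x y
      rw [hΘfun]
      show Submodule.Quotient.mk _ = Submodule.Quotient.mk _ + Submodule.Quotient.mk _
      rw [← Submodule.Quotient.mk_add]
      congr 1
      apply Subtype.ext
      show (Submodule.Quotient.mk (((mk0 (π (Polynomial.C (x+y))), 0, 0)) : MZ p n) : WZ p n P Q R)
        = Submodule.Quotient.mk _ + Submodule.Quotient.mk _
      rw [← Submodule.Quotient.mk_add]
      congr 1
      refine Prod.ext ?_ (Prod.ext ?_ ?_)
      · show mk0 (π (Polynomial.C (x+y))) = mk0 (π (Polynomial.C x)) + mk0 (π (Polynomial.C y))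
        rw [← map_add, ← map_add, map_add Polynomial.C]
      · show (0 : GZ p n) = 0 + 0
        rw [add_zero]
      · show (0 : GZ p n) = 0 + 0
        rw [add_zero]
    set Θ : ℤ_[p] →+ (Kk ⧸ Im) := AddMonoidHom.mk' Θfun hΘadd with hΘ
    have hΘsurj : Function.Surjective Θ := by
      intro z
      obtain ⟨k, rfl⟩ := Submodule.Quotient.mk_surjective _ z
      obtain ⟨w, hw⟩ := k
      have hw' : b • w = 0 := by
        have h := hw
        rw [hKk, LinearMap.mem_ker, LinearMap.lsmul_apply] at h
        exact h
      obtain ⟨m, hwm, hm⟩ := reduce w hw'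
      obtain ⟨x, m', hsplit, -⟩ := splitc m hm
      refine ⟨x, Eq.symm ?_⟩
      show Submodule.Quotient.mk _ = Θfun x
      rw [hΘfun]
      rw [Submodule.Quotient.eq]
      refine Submodule.mem_comap.mpr (LinearMap.mem_range.mpr
        ⟨Submodule.Quotient.mk m', ?_⟩)
      rw [LinearMap.lsmul_apply]
      show c • (Submodule.Quotient.mk m' : WZ p n P Q R)
        = ((⟨w, hw⟩ - ⟨Submodule.Quotient.mk (((mk0 (π (Polynomial.C x)), 0, 0)) : MZ p n),
            hmemK x⟩ : Kk) : WZ p n P Q R)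
      have hval : ((⟨w, hw⟩ - ⟨Submodule.Quotient.mk
            (((mk0 (π (Polynomial.C x)), 0, 0)) : MZ p n), hmemK x⟩ : Kk) : WZ p n P Q R)
          = w - Submodule.Quotient.mk (((mk0 (π (Polynomial.C x)), 0, 0)) : MZ p n) := rfl
      rw [hval, hwm, hmkW, ← Submodule.Quotient.mk_sub]
      congr 1
      rw [hsplit]
      abel
    have hΘker : ∀ x : ℤ_[p], Θ x = 0 ↔ x ∈ Ideal.span {C.eval 1} := by
      intro x
      constructor
      · intro hx
        have hx' : Θfun x = 0 := hx
        rw [hΘfun, Submodule.Quotient.mk_eq_zero] at hx'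
        have hx2 := Submodule.mem_comap.mp hx'
        obtain ⟨w', hw'⟩ := LinearMap.mem_range.mp hx2
        rw [LinearMap.lsmul_apply] at hw'
        obtain ⟨m₁, rfl⟩ := Submodule.Quotient.mk_surjective _ w'
        rw [hmkW] at hw'
        have hw'' : (Submodule.Quotient.mk (c • m₁) : WZ p n P Q R)
            = Submodule.Quotient.mk (((mk0 (π (Polynomial.C x)), 0, 0)) : MZ p n) := hw'
        rw [Submodule.Quotient.eq] at hw''
        obtain ⟨a, ha⟩ := Submodule.mem_span_singleton.mp hw''
        -- ha : a • q = c • m₁ - Ψ0 x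
        have hba : b * a = 0 := by
          apply annq
          rw [hms, ha, hsub, hΨker x hβ, sub_zero, ← hms, hbc0, hzs]
        obtain ⟨a', ha'⟩ := hbA a hba
        have hmain : (((mk0 (π (Polynomial.C x)), 0, 0)) : MZ p n) = c • (m₁ - a' • q) := by
          rw [hsub, ← hms, mul_comm c a', ← ha', ha]
          abel
        have hz : mk0 (π (Polynomial.C x)) = c • ((m₁ - a' • q).1) :=
          congrArg (fun m : MZ p n => m.1) hmain
        obtain ⟨g, hg⟩ := hmk0surj ((m₁ - a' • q).1)
        rw [← hg, hsmul0, hcdef, ← map_mul] at hz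
        have hx3 := congrArg E hz
        rw [hE, hE, eval_C, eval_mul] at hx3
        exact Ideal.mem_span_singleton.mpr ⟨g.eval 1, hx3⟩
      · intro hx
        obtain ⟨y, hy⟩ := Ideal.mem_span_singleton'.mp hx
        show Θfun x = 0
        rw [hΘfun, Submodule.Quotient.mk_eq_zero]
        refine Submodule.mem_comap.mpr (LinearMap.mem_range.mpr
          ⟨Submodule.Quotient.mk (((mk0 (π (Polynomial.C y)), 0, 0)) : MZ p n), ?_⟩)
        rw [LinearMap.lsmul_apply]
        show c • (Submodule.Quotient.mk (((mk0 (π (Polynomial.C y)), 0, 0)) : MZ p n)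
            : WZ p n P Q R) = Submodule.Quotient.mk (((mk0 (π (Polynomial.C x)), 0, 0)) : MZ p n)
        rw [hmkW]
        congr 1
        rw [hsmulM]
        refine Prod.ext ?_ (Prod.ext ?_ ?_)
        · show c • mk0 (π (Polynomial.C y)) = mk0 (π (Polynomial.C x))
          rw [hsmul0, hcdef, ← map_mul]
          apply hEinj
          rw [hE, hE, eval_mul, eval_C, eval_C, ← hy]
          ring
        · show c * 0 = 0
          rw [mul_zero]
        · show c * 0 = 0
          rw [mul_zero]
    have hkerEq : Θ.ker = (Ideal.span {C.eval 1}).toAddSubgroup := by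
      ext x
      rw [AddMonoidHom.mem_ker, hΘker]
      rfl
    have e := QuotientAddGroup.quotientKerEquivOfSurjective Θ hΘsurj
    have h1 : Nat.card (Kk ⧸ Im) = Nat.card (ℤ_[p] ⧸ Θ.ker) :=
      (Nat.card_congr e.toEquiv).symm
    have h2 : Nat.card (ℤ_[p] ⧸ Θ.ker) = Nat.card (ℤ_[p] ⧸ Ideal.span {C.eval 1}) := by
      rw [hkerEq]
      rfl
    exact h1.trans h2
  · rw [if_neg hβ]
    have hImtop : Submodule.comap
        (LinearMap.ker (LinearMap.lsmul (GZ p n) (WZ p n P Q R) b)).subtype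
        (LinearMap.range (LinearMap.lsmul (GZ p n) (WZ p n P Q R) c)) = ⊤ := by
      rw [Submodule.eq_top_iff']
      rintro ⟨w, hw⟩
      have hw' : b • w = 0 := by
        have h := hw
        rw [LinearMap.mem_ker, LinearMap.lsmul_apply] at h
        exact h
      obtain ⟨m, hwm, hm⟩ := reduce w hw'
      obtain ⟨x, m', hsplit, hx⟩ := splitc m hm
      have hx0 : x = 0 := by
        rcases mul_eq_zero.mp hx with h | h
        · exact absurd h hβ
        · exact h
      refine Submodule.mem_comap.mpr (LinearMap.mem_range.mpr
        ⟨Submodule.Quotient.mk m', ?_⟩)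
      rw [LinearMap.lsmul_apply]
      show c • (Submodule.Quotient.mk m' : WZ p n P Q R) = w
      rw [hmkW, hwm]
      congr 1
      rw [hsplit, hx0]
      have : ((mk0 (π (Polynomial.C (0:ℤ_[p]))), 0, 0) : MZ p n) = 0 := by
        refine Prod.ext ?_ (Prod.ext rfl rfl)
        show mk0 (π (Polynomial.C (0:ℤ_[p]))) = 0
        rw [map_zero, map_zero, map_zero]
      rw [this, zero_add]
    haveI hss : Subsingleton (cohQuot (GZ p n) (WZ p n P Q R) b c) :=
      Submodule.Quotient.subsingleton_iff.mpr hImtop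
    exact @Nat.card_of_subsingleton _ 0 hss


/-- If `P(ξ) ≠ 0` for all `p^n`-th roots of unity `ξ` and `B·C = X^{p^n} - 1`, then
`H(B,C,W)` has order `|ℤ_p/C(1)ℤ_p|` when `B(1) = 0` and is trivial when `B(1) ≠ 0`.
In particular (`B = 1-σ, C = N` and `B = N, C = 1-σ`) `|H⁰(G,W)| = p^n` and
`|H¹(G,W)| = 1`. -/
theorem stmt12 (p n : ℕ) [Fact p.Prime] (hn : 1 ≤ n) (P Q R : Polynomial ℤ_[p])
    (hP : ∀ ξ : AlgebraicClosure ℚ_[p], ξ ^ p ^ n = 1 →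
      Polynomial.eval₂
        ((algebraMap ℚ_[p] (AlgebraicClosure ℚ_[p])).comp PadicInt.Coe.ringHom)
        ξ P ≠ 0)
    (B C : Polynomial ℤ_[p]) (hBC : B * C = (X : Polynomial ℤ_[p]) ^ p ^ n - 1) :
    (Nat.card (cohQuot (GZ p n) (WZ p n P Q R)
        (Ideal.Quotient.mk (IgZ p n) B) (Ideal.Quotient.mk (IgZ p n) C))
      = if B.eval 1 = 0 then Nat.card (ℤ_[p] ⧸ Ideal.span {C.eval 1}) else 1) ∧
    Nat.card (cohQuot (GZ p n) (WZ p n P Q R)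
        (Ideal.Quotient.mk (IgZ p n) (1 - X))
        (Ideal.Quotient.mk (IgZ p n) (∑ k ∈ Finset.range (p ^ n), X ^ k)))
      = p ^ n ∧
    Nat.card (cohQuot (GZ p n) (WZ p n P Q R)
        (Ideal.Quotient.mk (IgZ p n) (∑ k ∈ Finset.range (p ^ n), X ^ k))
        (Ideal.Quotient.mk (IgZ p n) (1 - X)))
      = 1 := by
  classical
  have hppos : p ^ n ≠ 0 := pow_ne_zero _ (Fact.out : p.Prime).ne_zero
  have hfm : ((X:Polynomial ℤ_[p])^p^n - 1).Monic := by
    simpa using monic_X_pow_sub_C (1:ℤ_[p]) hppos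
  have hfne : ((X:Polynomial ℤ_[p])^p^n - 1) ≠ 0 := hfm.ne_zero
  set SS : Polynomial ℤ_[p] := ∑ k ∈ Finset.range (p^n), X ^ k with hSS
  have hgs : SS * (X - 1) = (X:Polynomial ℤ_[p])^p^n - 1 := geom_sum_mul X (p^n)
  have hX1 : (X - 1 : Polynomial ℤ_[p]) ≠ 0 := by
    have := Polynomial.X_sub_C_ne_zero (1:ℤ_[p])
    simpa using this
  have hSSne : SS ≠ 0 := by
    intro h; rw [h, zero_mul] at hgs; exact hfne hgs.symm
  have hBne : B ≠ 0 := by intro h; rw [h, zero_mul] at hBC; exact hfne hBC.symm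
  have hCne : C ≠ 0 := by intro h; rw [h, mul_zero] at hBC; exact hfne hBC.symm
  have hk1 : ∀ g : Polynomial ℤ_[p],
      ((X:Polynomial ℤ_[p])^p^n - 1) ∣ g * (1 - X) → SS ∣ g := by
    intro g hg
    rw [← hgs] at hg
    have hrw : g * (1 - X) = -(g * (X - 1)) := by ring
    rw [hrw, dvd_neg] at hg
    exact (mul_dvd_mul_iff_right hX1).mp hg
  have hk2 : ∀ g : Polynomial ℤ_[p],
      ((X:Polynomial ℤ_[p])^p^n - 1) ∣ g * SS → (1 - X : Polynomial ℤ_[p]) ∣ g := by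
    intro g hg
    rw [← hgs] at hg
    have h1 : (X - 1) * SS ∣ g * SS := by rwa [mul_comm (X - 1 : Polynomial ℤ_[p]) SS]
    have h2 : (X - 1 : Polynomial ℤ_[p]) ∣ g := (mul_dvd_mul_iff_right hSSne).mp h1
    have h3 : (1 - X : Polynomial ℤ_[p]) = -(X - 1) := by ring
    rw [h3, neg_dvd]
    exact h2
  have hBC2 : ((X:Polynomial ℤ_[p])^p^n - 1) ∣ (1 - X) * SS := by
    have : (1 - X) * SS = -((X:Polynomial ℤ_[p])^p^n - 1) := by rw [← hgs]; ring
    rw [this]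
    exact dvd_neg.mpr dvd_rfl
  have hBC3 : ((X:Polynomial ℤ_[p])^p^n - 1) ∣ SS * (1 - X) := by
    rwa [mul_comm] at hBC2
  have heval : SS.eval 1 = ((p^n : ℕ) : ℤ_[p]) := by
    simp [hSS, eval_finset_sum]
  refine ⟨?_, ?_, ?_⟩
  · refine key p n P Q R hP B C (by rw [hBC]) ?_ ?_
    · intro g hg
      rw [← hBC] at hg
      have : B * C ∣ B * g := by rwa [mul_comm g B] at hg
      exact (mul_dvd_mul_iff_left hBne).mp this
    · intro g hg
      rw [← hBC] at hg
      have : C * B ∣ C * g := by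
        rw [mul_comm C B]
        rwa [mul_comm g C] at hg
      exact (mul_dvd_mul_iff_left hCne).mp this
  · have h := key p n P Q R hP (1 - X) SS hBC2 hk1 hk2
    rw [h, if_pos (by simp), heval]
    exact aux_card_padic p n
  · have h := key p n P Q R hP SS (1 - X) hBC3 hk2 hk1
    rw [h, if_neg ?_]
    rw [heval]
    exact Nat.cast_ne_zero.mpr hppos

end
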